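/- Let $G$ be a finite group of order $pm$ with $p$ prime and $\gcd(p,m) = 1$, acting on a finite-dimensional module $V$ over an algebraically closed field $F$ of characteristic $p$. Then $\delta(G, V) \in \{0, 1, p\}$. -/

import Mathlib

open MvPolynomial

/-- The action of a matrix `A` on polynomials, substituting each variable `X i`
by the linear form `∑ j, A i j • X j`, so that `(matAct A f)(v) = f(A ⬝ v)`. -/
noncomputable def matAct {F : Type*} [Field F] {N : ℕ} (A : Matrix (Fin N) (Fin N) F) :
    MvPolynomial (Fin N) F →ₐ[F] MvPolynomial (Fin N) F :=
  aeval fun i => ∑ j, C (A i j) * X j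

/-- `f` is an invariant of the representation `ρ`: `σ(f) = f ∘ σ⁻¹ = f` for all `σ ∈ G`. -/
def IsInv {F : Type*} [Field F] {N : ℕ} {G : Type*} [Group G]
    (ρ : G →* Matrix.GeneralLinearGroup (Fin N) F) (f : MvPolynomial (Fin N) F) : Prop :=
  ∀ σ : G, matAct ((ρ σ⁻¹ : Matrix.GeneralLinearGroup (Fin N) F) : Matrix (Fin N) (Fin N) F) f = f

/-- `v` is a fixed point of the representation `ρ`. -/
def IsFixedPt {F : Type*} [Field F] {N : ℕ} {G : Type*} [Group G]
    (ρ : G →* Matrix.GeneralLinearGroup (Fin N) F) (v : Fin N → F) : Prop :=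
  ∀ σ : G, Matrix.mulVec ((ρ σ : Matrix.GeneralLinearGroup (Fin N) F) : Matrix (Fin N) (Fin N) F) v = v

/-- `ε(G,v)`: minimal positive degree of a homogeneous invariant not vanishing at `v`. -/
noncomputable def epsGV {F : Type*} [Field F] {N : ℕ} {G : Type*} [Group G]
    (ρ : G →* Matrix.GeneralLinearGroup (Fin N) F) (v : Fin N → F) : ℕ :=
  sInf {d : ℕ | 0 < d ∧ ∃ f : MvPolynomial (Fin N) F,
    IsInv ρ f ∧ f.IsHomogeneous d ∧ eval v f ≠ 0}

/-- `δ(G,V)`: the degree of reductivity, i.e. the supremum of `ε(G,v)` over nonzero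
fixed points `v` (and `0` if `V^G = {0}`). -/
noncomputable def deltaGV {F : Type*} [Field F] {N : ℕ} {G : Type*} [Group G]
    (ρ : G →* Matrix.GeneralLinearGroup (Fin N) F) : ℕ :=
  sSup {e : ℕ | ∃ v : Fin N → F, v ≠ 0 ∧ IsFixedPt ρ v ∧ e = epsGV ρ v}

namespace Aux

variable {F : Type*} [Field F] {N : ℕ}

lemma matAct_X (A : Matrix (Fin N) (Fin N) F) (i : Fin N) :
    matAct A (X i) = ∑ j, C (A i j) * X j := by simp [matAct]

lemma matAct_matAct (A B : Matrix (Fin N) (Fin N) F) (f : MvPolynomial (Fin N) F) :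
    matAct A (matAct B f) = matAct (B * A) f := by
  have h : (matAct A).comp (matAct B) = matAct (B * A) := by
    apply algHom_ext
    intro i
    simp only [AlgHom.coe_comp, Function.comp_apply, matAct_X, map_sum, map_mul,
      AlgHom.commutes]
    simp only [matAct_X, Matrix.mul_apply, map_sum, Finset.mul_sum, algebraMap_eq]
    rw [Finset.sum_comm]
    refine Finset.sum_congr rfl fun k _ => ?_
    rw [Finset.sum_mul]
    refine Finset.sum_congr rfl fun j _ => ?_
    rw [map_mul, ← algebraMap_eq, AlgHom.commutes, algebraMap_eq]
    ring
  calc matAct A (matAct B f) = ((matAct A).comp (matAct B)) f := rfl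
    _ = matAct (B * A) f := by rw [h]

lemma eval_matAct (A : Matrix (Fin N) (Fin N) F) (v : Fin N → F) (f : MvPolynomial (Fin N) F) :
    eval v (matAct A f) = eval (A.mulVec v) f := by
  have h : (aeval v : MvPolynomial (Fin N) F →ₐ[F] F).comp (matAct A) = aeval (A.mulVec v) := by
    apply algHom_ext
    intro i
    simp [matAct_X, Matrix.mulVec, dotProduct]
  have := congrArg (fun g : MvPolynomial (Fin N) F →ₐ[F] F => g f) h
  simp only [AlgHom.coe_comp, Function.comp_apply] at this
  calc eval v (matAct A f) = aeval v (matAct A f) := by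
        rw [← coe_aeval_eq_eval]; rfl
    _ = aeval (A.mulVec v) f := this
    _ = eval (A.mulVec v) f := by rw [← coe_aeval_eq_eval]; rfl

lemma matAct_isHomogeneous {A : Matrix (Fin N) (Fin N) F} {f : MvPolynomial (Fin N) F} {n : ℕ}
    (hf : f.IsHomogeneous n) : (matAct A f).IsHomogeneous n := by
  have := hf.eval₂ (algebraMap F (MvPolynomial (Fin N) F))
    (fun i => ∑ j, C (A i j) * X j) (fun r => by simpa [algebraMap_eq] using isHomogeneous_C _ r)
    (fun i => IsHomogeneous.sum _ _ _ fun j _ => isHomogeneous_C_mul_X _ _)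
  unfold matAct; rw [aeval_def, ← one_mul n]; exact this


lemma matAct_C (A : Matrix (Fin N) (Fin N) F) (a : F) : matAct A (C a) = C a := by
  simp [matAct]

lemma pderiv_matAct_X (A : Matrix (Fin N) (Fin N) F) (k i : Fin N) :
    pderiv k (matAct A (X i)) = C (A i k) := by
  rw [matAct_X, map_sum]
  simp [pderiv_C_mul, pderiv_X, Pi.single_apply]

lemma pderiv_matAct (A : Matrix (Fin N) (Fin N) F) (f : MvPolynomial (Fin N) F) (k : Fin N) :
    pderiv k (matAct A f) = ∑ j, C (A j k) * matAct A (pderiv j f) := by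
  induction f using MvPolynomial.induction_on with
  | C a => simp [matAct_C]
  | add f g hf hg => simp [map_add, mul_add, hf, hg, Finset.sum_add_distrib]
  | mul_X f i hf =>
    have e1 : ∑ j, C (A j k) * (matAct A (pderiv j f) * matAct A (X i))
        = (∑ j, C (A j k) * matAct A (pderiv j f)) * matAct A (X i) := by
      rw [Finset.sum_mul]
      exact Finset.sum_congr rfl fun j _ => (mul_assoc _ _ _).symm
    have e2 : ∑ j, C (A j k) * (matAct A f * matAct A (pderiv j (X i)))
        = matAct A f * C (A i k) := by
      simp [pderiv_X, Pi.single_apply, apply_ite (matAct A), mul_ite, Finset.sum_ite_eq',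
        mul_comm, mul_left_comm]
    calc pderiv k (matAct A (f * X i))
        = pderiv k (matAct A f) * matAct A (X i) + matAct A f * C (A i k) := by
          rw [map_mul, pderiv_mul, pderiv_matAct_X]
      _ = ∑ j, C (A j k) * matAct A (pderiv j (f * X i)) := by
          rw [hf, ← e1, ← e2, ← Finset.sum_add_distrib]
          refine Finset.sum_congr rfl fun j _ => ?_
          rw [pderiv_mul, map_add, map_mul, map_mul, mul_add]

/-- Directional derivative in direction `v`. -/
noncomputable def Dv (v : Fin N → F) (f : MvPolynomial (Fin N) F) : MvPolynomial (Fin N) F :=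
  ∑ i, C (v i) * pderiv i f

lemma Dv_matAct (A : Matrix (Fin N) (Fin N) F) (v : Fin N → F) (f : MvPolynomial (Fin N) F) :
    Dv v (matAct A f) = matAct A (Dv (A.mulVec v) f) := by
  unfold Dv
  rw [map_sum]
  simp only [pderiv_matAct, Finset.mul_sum, map_mul, matAct_C]
  rw [Finset.sum_comm]
  refine Finset.sum_congr rfl fun j _ => ?_
  have : ∑ x, C (v x) * (C (A j x) * matAct A (pderiv j f))
      = (∑ x, C (A j x * v x)) * matAct A (pderiv j f) := by
    rw [Finset.sum_mul]
    exact Finset.sum_congr rfl fun k _ => by rw [map_mul]; ring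
  rw [this, ← map_sum C]
  rfl

lemma degree_fin (d : Fin N →₀ ℕ) : d.degree = ∑ i, d i := by
  rw [Finsupp.degree]
  exact Finset.sum_subset (Finset.subset_univ _)
    (fun i _ hi => by simpa using Finsupp.notMem_support_iff.mp hi)

lemma degree_of_mem_support {f : MvPolynomial (Fin N) F} {n : ℕ} (hf : f.IsHomogeneous n)
    {d : Fin N →₀ ℕ} (hd : d ∈ f.support) : d.degree = n := by
  rw [Finsupp.degree_eq_weight_one]
  exact hf (mem_support_iff.mp hd)

lemma Dv_sum {ι : Type*} (v : Fin N → F) (s : Finset ι) (g : ι → MvPolynomial (Fin N) F) :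
    Dv v (∑ x ∈ s, g x) = ∑ x ∈ s, Dv v (g x) := by
  unfold Dv
  simp only [map_sum, Finset.mul_sum]
  exact Finset.sum_comm

lemma sub_single_apply (d : Fin N →₀ ℕ) (i j : Fin N) :
    ((d - Finsupp.single i 1 : Fin N →₀ ℕ)) j = if j = i then d i - 1 else d j := by
  rw [Finsupp.tsub_apply, Finsupp.single_apply]
  rcases eq_or_ne j i with h | h
  · subst h; simp
  · rw [if_neg (fun hh => h hh.symm), if_neg h, Nat.sub_zero]

lemma degree_sub_single {d : Fin N →₀ ℕ} {i : Fin N} (hi : 0 < d i) :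
    (d - Finsupp.single i 1).degree = d.degree - 1 := by
  rw [degree_fin, degree_fin]
  rw [← Finset.add_sum_erase Finset.univ d (Finset.mem_univ i),
      ← Finset.add_sum_erase Finset.univ _ (Finset.mem_univ i)]
  have h1 : ∑ j ∈ Finset.univ.erase i, ((d - Finsupp.single i 1 : Fin N →₀ ℕ)) j
      = ∑ j ∈ Finset.univ.erase i, d j :=
    Finset.sum_congr rfl fun j hj => by
      rw [sub_single_apply, if_neg (Finset.mem_erase.mp hj).1]
  rw [h1, sub_single_apply, if_pos rfl]
  omega

lemma pderiv_isHomogeneous {f : MvPolynomial (Fin N) F} {n : ℕ} (hf : f.IsHomogeneous n)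
    (i : Fin N) : (pderiv i f).IsHomogeneous (n - 1) := by
  conv_lhs => rw [← f.support_sum_monomial_coeff]
  rw [map_sum]
  refine IsHomogeneous.sum _ _ _ fun d hd => ?_
  rw [pderiv_monomial]
  rcases Nat.eq_zero_or_pos (d i) with h0 | hpos
  · rw [h0]; simpa using isHomogeneous_zero (Fin N) F (n - 1)
  · exact isHomogeneous_monomial _ (by rw [degree_sub_single hpos, degree_of_mem_support hf hd])

lemma Dv_isHomogeneous {f : MvPolynomial (Fin N) F} {n : ℕ} (hf : f.IsHomogeneous n)
    (v : Fin N → F) : (Dv v f).IsHomogeneous (n - 1) :=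
  IsHomogeneous.sum _ _ _ fun i _ => (pderiv_isHomogeneous hf i).C_mul _

lemma eval_Dv_monomial (v : Fin N → F) (d : Fin N →₀ ℕ) (c : F) :
    eval v (Dv v (monomial d c)) = (d.degree : F) * eval v (monomial d c) := by
  unfold Dv
  rw [map_sum]
  simp only [map_mul, eval_C, pderiv_monomial, eval_monomial, Finsupp.prod_pow]
  have key : ∀ i : Fin N, v i * (c * (d i : F) * ∏ j, v j ^ ((d - Finsupp.single i 1 : Fin N →₀ ℕ)) j)
      = (d i : F) * (c * ∏ j, v j ^ d j) := by
    intro i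
    rcases Nat.eq_zero_or_pos (d i) with h0 | hpos
    · simp [h0]
    · have herase : ∏ j ∈ Finset.univ.erase i, v j ^ ((d - Finsupp.single i 1 : Fin N →₀ ℕ)) j
          = ∏ j ∈ Finset.univ.erase i, v j ^ d j :=
        Finset.prod_congr rfl fun j hj => by
          rw [sub_single_apply, if_neg (Finset.mem_erase.mp hj).1]
      rw [← Finset.mul_prod_erase Finset.univ _ (Finset.mem_univ i),
          ← Finset.mul_prod_erase Finset.univ (fun j => v j ^ d j) (Finset.mem_univ i),
          herase, sub_single_apply, if_pos rfl]
      have hpow : v i * v i ^ (d i - 1) = v i ^ d i := by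
        conv_rhs => rw [show d i = (d i - 1) + 1 by omega]
        rw [pow_succ]
        ring
      calc v i * (c * (d i : F) * (v i ^ (d i - 1) * ∏ j ∈ Finset.univ.erase i, v j ^ d j))
          = (d i : F) * (c * ((v i * v i ^ (d i - 1)) * ∏ j ∈ Finset.univ.erase i, v j ^ d j)) :=
            by ring
        _ = _ := by rw [hpow]
  calc ∑ i, v i * (c * (d i : F) * ∏ j, v j ^ ((d - Finsupp.single i 1 : Fin N →₀ ℕ)) j)
      = ∑ i, (d i : F) * (c * ∏ j, v j ^ d j) := Finset.sum_congr rfl fun i _ => key i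
    _ = (∑ i, (d i : F)) * (c * ∏ j, v j ^ d j) := by rw [Finset.sum_mul]
    _ = (d.degree : F) * (c * ∏ j, v j ^ d j) := by
        rw [degree_fin, Nat.cast_sum]

lemma eval_Dv_self {f : MvPolynomial (Fin N) F} {n : ℕ} (hf : f.IsHomogeneous n)
    (v : Fin N → F) : eval v (Dv v f) = (n : F) * eval v f := by
  conv_lhs => rw [← f.support_sum_monomial_coeff]
  conv_rhs => rw [← f.support_sum_monomial_coeff]
  rw [Dv_sum, map_sum, map_sum, Finset.mul_sum]
  refine Finset.sum_congr rfl fun d hd => ?_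
  rw [eval_Dv_monomial, degree_of_mem_support hf hd]

variable {G : Type*} [Group G] (ρ : G →* Matrix.GeneralLinearGroup (Fin N) F)

/-- The (left) action of `G` on polynomials. -/
noncomputable def act (σ : G) (f : MvPolynomial (Fin N) F) : MvPolynomial (Fin N) F :=
  matAct ((ρ σ⁻¹ : Matrix.GeneralLinearGroup (Fin N) F) : Matrix (Fin N) (Fin N) F) f

lemma act_act (σ τ : G) (f : MvPolynomial (Fin N) F) :
    act ρ σ (act ρ τ f) = act ρ (σ * τ) f := by
  unfold act
  rw [matAct_matAct]
  congr 2
  rw [← Units.val_mul, ← map_mul, ← mul_inv_rev]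

lemma isInv_iff (f : MvPolynomial (Fin N) F) : IsInv ρ f ↔ ∀ σ, act ρ σ f = f := Iff.rfl

lemma eval_act {v : Fin N → F} (hv : IsFixedPt ρ v) (σ : G) (f : MvPolynomial (Fin N) F) :
    eval v (act ρ σ f) = eval v f := by
  unfold act; rw [eval_matAct, hv σ⁻¹]

lemma act_isHomogeneous {f : MvPolynomial (Fin N) F} {n : ℕ} (hf : f.IsHomogeneous n) (σ : G) :
    (act ρ σ f).IsHomogeneous n := matAct_isHomogeneous hf

set_option maxHeartbeats 2000000 in
lemma sum_smul_quot {Q : Type*} [Fintype Q] {M : Type*} [AddCommMonoid M]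
    {G : Type*} [Group G] [MulAction G Q] (f : Q → M) (τ : G) :
    ∑ q, f (τ • q) = ∑ q, f q :=
  Fintype.sum_bijective (fun q => τ • q) (MulAction.bijective τ) _ _ (fun q => rfl)

lemma exists_deg_p {p m : ℕ} (hp : p.Prime) [CharP F p] [Fintype G]
    (hcard : Fintype.card G = p * m) (hcop : Nat.Coprime p m)
    {v : Fin N → F} (hv0 : v ≠ 0) (hv : IsFixedPt ρ v) :
    ∃ f : MvPolynomial (Fin N) F, IsInv ρ f ∧ f.IsHomogeneous p ∧ eval v f ≠ 0 := by
  haveI : Fact p.Prime := ⟨hp⟩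
  obtain ⟨i0, hi0⟩ : ∃ i, v i ≠ 0 := by
    by_contra h; push_neg at h; exact hv0 (funext h)
  have hpm : ¬ p ∣ m := (Nat.Prime.coprime_iff_not_dvd hp).mp hcop
  have hm0 : m ≠ 0 := by
    rintro rfl
    rw [mul_zero] at hcard
    exact Fintype.card_pos.ne' hcard
  obtain ⟨P⟩ : Nonempty (Sylow p G) := inferInstance
  have hPcard : Nat.card P = p := by
    rw [Sylow.card_eq_multiplicity, Nat.card_eq_fintype_card, hcard,
      Nat.factorization_mul hp.ne_zero hm0]
    rw [Finsupp.add_apply, Nat.Prime.factorization_self hp,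
      Nat.factorization_eq_zero_of_not_dvd hpm, pow_one]
  -- the norm over the Sylow subgroup
  obtain ⟨ℓ, hℓdef⟩ : ∃ l : MvPolynomial (Fin N) F, l = X i0 := ⟨_, rfl⟩
  haveI : Fintype ((P : Subgroup G) : Type _) := Fintype.ofFinite _
  obtain ⟨nrm, hnrmdef⟩ : ∃ n : MvPolynomial (Fin N) F,
      n = ∏ σ : (P : Subgroup G), act ρ (σ : G) ℓ := ⟨_, rfl⟩
  have hnrmP : ∀ τ ∈ (P : Subgroup G), act ρ τ nrm = nrm := by
    intro τ hτ
    have h1 : act ρ τ nrm = ∏ σ : (P : Subgroup G), act ρ (τ * (σ : G)) ℓ := by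
      rw [hnrmdef]
      unfold act
      rw [map_prod]
      exact Finset.prod_congr rfl fun σ _ => act_act ρ τ (σ : G) ℓ
    rw [h1, hnrmdef]
    exact Fintype.prod_equiv (Equiv.mulLeft (⟨τ, hτ⟩ : (P : Subgroup G)))
      (fun σ => act ρ (τ * (σ : G)) ℓ) (fun σ => act ρ (σ : G) ℓ) (fun σ => rfl)
  have hFf : ∀ a b : G, (a : G ⧸ (P : Subgroup G)) = (b : G ⧸ (P : Subgroup G)) →
      act ρ a nrm = act ρ b nrm := by
    intro a b hab
    have hx : a⁻¹ * b ∈ (P : Subgroup G) := (QuotientGroup.eq).mp hab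
    have : act ρ b nrm = act ρ (a * (a⁻¹ * b)) nrm := by
      congr 1
      group
    rw [this, ← act_act, hnrmP _ hx]
  haveI : Fintype (G ⧸ (P : Subgroup G)) := Fintype.ofFinite _
  obtain ⟨T, hTdef⟩ : ∃ t : MvPolynomial (Fin N) F,
      t = ∑ q : G ⧸ (P : Subgroup G), act ρ q.out nrm := ⟨_, rfl⟩
  have hcardQ : Nat.card (G ⧸ (P : Subgroup G)) = m := by
    have := Subgroup.card_eq_card_quotient_mul_card_subgroup (P : Subgroup G)
    rw [hPcard, Nat.card_eq_fintype_card (α := G), hcard] at this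
    have hp0 : 0 < p := hp.pos
    exact Nat.eq_of_mul_eq_mul_right hp0 (this.symm.trans (mul_comm p m))
  refine ⟨T, ?_, ?_, ?_⟩
  · -- invariance
    rw [isInv_iff]
    intro τ
    rw [hTdef]
    have hsum : act ρ τ (∑ q : G ⧸ (P : Subgroup G), act ρ q.out nrm)
        = ∑ q : G ⧸ (P : Subgroup G), act ρ τ (act ρ q.out nrm) :=
      map_sum (matAct _) _ _
    rw [hsum]
    have step : ∀ q : G ⧸ (P : Subgroup G),
        act ρ τ (act ρ q.out nrm) = act ρ (τ • q).out nrm := by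
      intro q
      rw [act_act]
      refine hFf _ _ ?_
      rw [QuotientGroup.out_eq', ← smul_eq_mul, MulAction.Quotient.mk_smul_out]
    rw [Finset.sum_congr rfl fun q _ => step q]
    exact sum_smul_quot (Q := G ⧸ (P : Subgroup G)) (fun q => act ρ q.out nrm) τ
  · -- homogeneity
    have hnrm : nrm.IsHomogeneous p := by
      rw [hnrmdef, hℓdef]
      have h1 : (∏ σ : (P : Subgroup G), act ρ (σ : G) (X i0)).IsHomogeneous (∑ _σ : (P : Subgroup G), 1) :=
        IsHomogeneous.prod _ _ _ fun σ _ => act_isHomogeneous ρ (isHomogeneous_X F i0) _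
      have h2 : (∑ _σ : (P : Subgroup G), 1) = p := by
        rw [Finset.sum_const, smul_eq_mul, mul_one, Finset.card_univ,
          ← Nat.card_eq_fintype_card, hPcard]
      rwa [h2] at h1
    rw [hTdef]
    exact IsHomogeneous.sum _ _ _ fun q _ => act_isHomogeneous ρ hnrm _
  · -- evaluation
    have hnrmv : eval v nrm = (v i0) ^ p := by
      rw [hnrmdef, map_prod]
      have e1 : ∀ σ : (P : Subgroup G), eval v (act ρ (σ : G) ℓ) = eval v ℓ :=
        fun σ => eval_act ρ hv (σ : G) ℓ
      rw [Finset.prod_congr rfl fun σ _ => e1 σ]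
      rw [Finset.prod_const, hℓdef, eval_X, Finset.card_univ, ← Nat.card_eq_fintype_card, hPcard]
    have hTv : eval v T = (m : F) * (v i0) ^ p := by
      rw [hTdef, map_sum]
      have e2 : ∀ q : G ⧸ (P : Subgroup G), eval v (act ρ q.out nrm) = v i0 ^ p :=
        fun q => (eval_act ρ hv q.out nrm).trans hnrmv
      rw [Finset.sum_congr rfl fun q _ => e2 q]
      rw [Finset.sum_const, nsmul_eq_mul, Finset.card_univ, ← Nat.card_eq_fintype_card, hcardQ]
    rw [hTv]
    refine mul_ne_zero ?_ (pow_ne_zero _ hi0)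
    simpa [CharP.cast_eq_zero_iff F p m] using hpm

lemma eps_eq_one_or_p {p m : ℕ} (hp : p.Prime) [CharP F p] [Fintype G]
    (hcard : Fintype.card G = p * m) (hcop : Nat.Coprime p m)
    {v : Fin N → F} (hv0 : v ≠ 0) (hv : IsFixedPt ρ v) :
    epsGV ρ v = 1 ∨ epsGV ρ v = p := by
  obtain ⟨f, hfi, hfh, hfv⟩ := exists_deg_p ρ hp hcard hcop hv0 hv
  set S := {d : ℕ | 0 < d ∧ ∃ f : MvPolynomial (Fin N) F,
    IsInv ρ f ∧ f.IsHomogeneous d ∧ eval v f ≠ 0} with hS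
  have he : epsGV ρ v = sInf S := rfl
  have hpS : p ∈ S := ⟨hp.pos, f, hfi, hfh, hfv⟩
  have hmem : sInf S ∈ S := Nat.sInf_mem ⟨p, hpS⟩
  have hle : sInf S ≤ p := Nat.sInf_le hpS
  obtain ⟨hpos, g, hgi, hgh, hgv⟩ := hmem
  by_cases he1 : sInf S = 1
  · left; rw [he, he1]
  right
  have hdvd : p ∣ sInf S := by
    by_contra hnd
    have heF : ((sInf S : ℕ) : F) ≠ 0 := fun h => hnd ((CharP.cast_eq_zero_iff F p _).mp h)
    have hD : (Dv v g).IsHomogeneous (sInf S - 1) := Dv_isHomogeneous hgh v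
    have hDi : IsInv ρ (Dv v g) := by
      intro σ
      have hA : ((ρ σ⁻¹ : Matrix.GeneralLinearGroup (Fin N) F) :
          Matrix (Fin N) (Fin N) F).mulVec v = v := hv σ⁻¹
      have hDm := Dv_matAct ((ρ σ⁻¹ : Matrix.GeneralLinearGroup (Fin N) F) :
          Matrix (Fin N) (Fin N) F) v g
      rw [hA] at hDm
      rw [← hDm, hgi σ]
    have hDv : eval v (Dv v g) ≠ 0 := by
      rw [eval_Dv_self hgh v]
      exact mul_ne_zero heF hgv
    have hmem2 : sInf S - 1 ∈ S := ⟨by omega, Dv v g, hDi, hD, hDv⟩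
    have := Nat.sInf_le hmem2
    omega
  have := Nat.le_of_dvd hpos hdvd
  rw [he]
  omega
end Aux

theorem stmt13 {F : Type*} [Field F] [IsAlgClosed F] {p m : ℕ} (hp : p.Prime) [CharP F p]
    {G : Type*} [Group G] [Fintype G]
    (hcard : Fintype.card G = p * m) (hcop : Nat.Coprime p m)
    {N : ℕ} (ρ : G →* Matrix.GeneralLinearGroup (Fin N) F) :
    deltaGV ρ = 0 ∨ deltaGV ρ = 1 ∨ deltaGV ρ = p := by
  set E := {e : ℕ | ∃ v : Fin N → F, v ≠ 0 ∧ IsFixedPt ρ v ∧ e = epsGV ρ v} with hE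
  have hdelta : deltaGV ρ = sSup E := rfl
  rcases E.eq_empty_or_nonempty with h | h
  · left
    rw [hdelta, h, csSup_empty]
    rfl
  · have hsub : ∀ e ∈ E, e = 1 ∨ e = p := by
      rintro e ⟨v, hv0, hv, rfl⟩
      exact Aux.eps_eq_one_or_p ρ hp hcard hcop hv0 hv
    have h2p : 2 ≤ p := hp.two_le
    have hbdd : BddAbove E := ⟨p, fun e he => by rcases hsub e he with h1 | h1 <;> omega⟩
    have hmem := Nat.sSup_mem h hbdd
    rcases hsub _ hmem with h1 | h1
    · right; left; rw [hdelta, h1]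
    · right; right; rw [hdelta, h1]
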